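/- Let l ∈ {K, K4, KD4, S4}, let φ be a modal formula, and let S be a view (with respect to φ) that is consistent for l and that completes itself. If th(p(S)) is complete for l, then for every child c ∈ C(S), th(c) is complete for l. -/

import Mathlib

/-- Modal formulas in negation normal form, as in the paper:
φ ::= ⊥ | ⊤ | p | ¬p | φ∧φ | φ∨φ | □φ | ◇φ. -/
inductive Form : Type where
  | bot : Form
  | top : Form
  | pos : ℕ → Form
  | npos : ℕ → Form
  | and : Form → Form → Form
  | or : Form → Form → Form
  | box : Form → Form
  | dia : Form → Form
deriving DecidableEq

namespace Form

/-- Negation, defined as usual (by De Morgan dualities). -/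
def neg : Form → Form
  | bot => top
  | top => bot
  | pos p => npos p
  | npos p => pos p
  | and φ ψ => or φ.neg ψ.neg
  | or φ ψ => and φ.neg ψ.neg
  | box φ => dia φ.neg
  | dia φ => box φ.neg

/-- Implication φ → ψ, defined as usual. -/
def imp (φ ψ : Form) : Form := or φ.neg ψ

/-- Bi-implication φ ↔ ψ, defined as usual. -/
def biimp (φ ψ : Form) : Form := and (imp φ ψ) (imp ψ φ)

/-- P(φ): the set of propositional variables occurring in φ. -/
def vars : Form → Finset ℕ
  | bot => ∅
  | top => ∅
  | pos p => {p}
  | npos p => {p}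
  | and φ ψ => φ.vars ∪ ψ.vars
  | or φ ψ => φ.vars ∪ ψ.vars
  | box φ => φ.vars
  | dia φ => φ.vars

/-- Modal depth. -/
def md : Form → ℕ
  | bot => 0
  | top => 0
  | pos _ => 0
  | npos _ => 0
  | and φ ψ => max φ.md ψ.md
  | or φ ψ => max φ.md ψ.md
  | box φ => φ.md + 1
  | dia φ => φ.md + 1

/-- sub(φ): the set of subformulas of φ. -/
def subf : Form → Finset Form
  | bot => {bot}
  | top => {top}
  | pos p => {pos p}
  | npos p => {npos p}
  | and φ ψ => insert (and φ ψ) (φ.subf ∪ ψ.subf)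
  | or φ ψ => insert (or φ ψ) (φ.subf ∪ ψ.subf)
  | box φ => insert (box φ) φ.subf
  | dia φ => insert (dia φ) φ.subf

/-- s̄ub(φ) = sub(φ) ∪ {¬ψ : ψ ∈ sub(φ)}. -/
def subBar (φ : Form) : Finset Form := φ.subf ∪ φ.subf.image neg

/-- □^k φ : k nested boxes. -/
def boxIter : ℕ → Form → Form
  | 0, φ => φ
  | n + 1, φ => box (boxIter n φ)

def isDia : Form → Bool
  | dia _ => true
  | _ => false

def isBox : Form → Bool
  | box _ => true
  | _ => false

end Form

/-- Big conjunction over a finite set of formulas (⋀∅ = ⊤). -/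
noncomputable def bigAnd (s : Finset Form) : Form := s.toList.foldr Form.and Form.top

/-- Big disjunction over a finite set of formulas (⋁∅ = ⊥). -/
noncomputable def bigOr (s : Finset Form) : Form := s.toList.foldr Form.or Form.bot

/-- th(a) = ⋀ a. -/
noncomputable def th (a : Finset Form) : Form := bigAnd a

/-- A finite Kripke model: a nonempty finite set of states, an accessibility
relation and a valuation. -/
structure Model : Type 1 where
  W : Type
  nonempty : Nonempty W
  finite : Finite W
  R : W → W → Prop
  V : W → Set ℕ

/-- Satisfaction M,w ⊨ φ. -/
def Model.sat (M : Model) : M.W → Form → Prop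
  | _, .bot => False
  | _, .top => True
  | w, .pos p => p ∈ M.V w
  | w, .npos p => p ∉ M.V w
  | w, .and φ ψ => M.sat w φ ∧ M.sat w ψ
  | w, .or φ ψ => M.sat w φ ∨ M.sat w ψ
  | w, .box φ => ∀ v, M.R w v → M.sat v φ
  | w, .dia φ => ∃ v, M.R w v ∧ M.sat v φ

/-- The six base logics K, D, T, K4, KD4, S4. -/
inductive BaseLogic : Type where
  | K | D | T | K4 | KD4 | S4
deriving DecidableEq

/-- A logic: a base logic, possibly extended by axiom 5. -/
structure Logic : Type where
  base : BaseLogic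
  has5 : Bool
deriving DecidableEq

def Logic.K : Logic := ⟨.K, false⟩
def Logic.D : Logic := ⟨.D, false⟩
def Logic.T : Logic := ⟨.T, false⟩
def Logic.K4 : Logic := ⟨.K4, false⟩
def Logic.KD4 : Logic := ⟨.KD4, false⟩
def Logic.S4 : Logic := ⟨.S4, false⟩

/-- l + 5. -/
def BaseLogic.plus5 (b : BaseLogic) : Logic := ⟨b, true⟩

/-- M is a model for the logic l (frame conditions). -/
def Model.IsFor (M : Model) (l : Logic) : Prop :=
  (match l.base with
    | .K => True
    | .D => ∀ w, ∃ v, M.R w v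
    | .T => ∀ w, M.R w w
    | .K4 => ∀ a b c, M.R a b → M.R b c → M.R a c
    | .KD4 => (∀ w, ∃ v, M.R w v) ∧ (∀ a b c, M.R a b → M.R b c → M.R a c)
    | .S4 => (∀ w, M.R w w) ∧ (∀ a b c, M.R a b → M.R b c → M.R a c))
  ∧ (l.has5 = true → ∀ a b c, M.R a b → M.R a c → M.R b c)

/-- φ is satisfiable for l: satisfied at some state of some finite model for l. -/
def Satisfiable (l : Logic) (φ : Form) : Prop :=
  ∃ M : Model, M.IsFor l ∧ ∃ w : M.W, M.sat w φ

/-- φ is valid for l: satisfied at every state of every finite model for l. -/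
def Valid (l : Logic) (φ : Form) : Prop :=
  ∀ M : Model, M.IsFor l → ∀ w : M.W, M.sat w φ

/-- φ is complete for l: for every ψ ∈ L(P(φ)), φ→ψ or φ→¬ψ is valid for l. -/
def Complete (l : Logic) (φ : Form) : Prop :=
  ∀ ψ : Form, ψ.vars ⊆ φ.vars → (Valid l (φ.imp ψ) ∨ Valid l (φ.imp ψ.neg))

/-- Z is a bisimulation modulo P from M to M'. -/
def IsBisim (P : Set ℕ) (M M' : Model) (Z : M.W → M'.W → Prop) : Prop :=
  (∃ s s', Z s s') ∧
  ∀ s s', Z s s' →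
    (M.V s ∩ P = M'.V s' ∩ P) ∧
    (∀ t, M.R s t → ∃ t', M'.R s' t' ∧ Z t t') ∧
    (∀ t', M'.R s' t' → ∃ t, M.R s t ∧ Z t t')

/-- (M,a) ∼_P (M',a'). -/
def Bisimilar (P : Set ℕ) (M : Model) (a : M.W) (M' : Model) (a' : M'.W) : Prop :=
  ∃ Z, IsBisim P M M' Z ∧ Z a a'

/-- (M,a) ≡_P (M',a'): the two pointed models satisfy the same formulas of L(P). -/
def EquivP (P : Set ℕ) (M : Model) (a : M.W) (M' : Model) (a' : M'.W) : Prop :=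
  ∀ φ : Form, ↑φ.vars ⊆ P → (M.sat a φ ↔ M'.sat a' φ)

/-- (M,s) is flat (for base logic l, with axiom 5): the carrier is {s}∪W and
R = R1 ∪ R2 with R1 ⊆ {s}×W, R2 an equivalence relation on W, and s ∈ W if
l ∈ {T,S4}. -/
def Flat (l : BaseLogic) (M : Model) (s : M.W) : Prop :=
  ∃ W : Set M.W, (∀ w, w = s ∨ w ∈ W) ∧
    ∃ R1 R2 : M.W → M.W → Prop,
      (∀ x y, M.R x y ↔ (R1 x y ∨ R2 x y)) ∧
      (∀ x y, R1 x y → x = s ∧ y ∈ W) ∧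
      (∀ x y, R2 x y → x ∈ W ∧ y ∈ W) ∧
      (∀ x ∈ W, R2 x x) ∧
      (∀ x y, R2 x y → R2 y x) ∧
      (∀ x y z, R2 x y → R2 y z → R2 x z) ∧
      ((l = .T ∨ l = .S4) → s ∈ W)

/-- A maximal state for l with respect to φ: a maximally l-consistent subset
of s̄ub(φ). -/
def MaxState (l : Logic) (φ : Form) (a : Finset Form) : Prop :=
  a ⊆ φ.subBar ∧ Satisfiable l (th a) ∧ ∀ ψ ∈ φ.subf, ψ ∈ a ∨ ψ.neg ∈ a

/-- D(x) = {◇ψ : ◇ψ ∈ x}. -/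
def DSet (x : Finset Form) : Finset Form := x.filter (fun ψ => ψ.isDia = true)

/-- B(x) = {□ψ : □ψ ∈ x}. -/
def BSet (x : Finset Form) : Finset Form := x.filter (fun ψ => ψ.isBox = true)

/-- A view: a parent-state and a finite set of children-states. -/
structure View : Type where
  parent : Finset Form
  children : Finset (Finset Form)

/-- The view is with respect to φ: all its states are subsets of s̄ub(φ). -/
def View.WF (φ : Form) (S : View) : Prop :=
  S.parent ⊆ φ.subBar ∧ ∀ c ∈ S.children, c ⊆ φ.subBar

/-- A set of formulas is l-closed. -/
def LClosed (l : Logic) (P : Finset ℕ) (s : Finset Form) : Prop :=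
  (∀ φ1 φ2 : Form, Form.and φ1 φ2 ∈ s → φ1 ∈ s ∧ φ2 ∈ s) ∧
  (∀ φ1 φ2 : Form, Form.or φ1 φ2 ∈ s → φ1 ∈ s ∨ φ2 ∈ s) ∧
  ((l.base = .T ∨ l.base = .S4) → ∀ ψ : Form, Form.box ψ ∈ s → ψ ∈ s) ∧
  (∀ p ∈ P, Form.pos p ∈ s ∨ Form.npos p ∈ s)

/-- The view S is l-complete. -/
def ViewLComplete (l : Logic) (P : Finset ℕ) (S : View) : Prop :=
  LClosed l P S.parent ∧
  (∀ c ∈ S.children, LClosed l P c) ∧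
  (∀ ψ : Form, Form.dia ψ ∈ S.parent → ∃ c ∈ S.children, ψ ∈ c) ∧
  (∀ ψ : Form, Form.box ψ ∈ S.parent → ∀ c ∈ S.children, ψ ∈ c) ∧
  ((l.base = .K4 ∨ l.base = .KD4 ∨ l.base = .S4) →
    ∀ ψ : Form, Form.box ψ ∈ S.parent → ∀ c ∈ S.children, Form.box ψ ∈ c) ∧
  (l.base = .KD4 → S.children.Nonempty)

/-- The view S is consistent for l: every one of its states is consistent. -/
def ViewConsistent (l : Logic) (S : View) : Prop :=
  Satisfiable l (th S.parent) ∧ ∀ c ∈ S.children, Satisfiable l (th c)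

/-- d = max{md(th(c')) : c' ∈ C(S)}. -/
noncomputable def childDepth (S : View) : ℕ := S.children.sup (fun c => (th c).md)

/-- A K-maximal child-state: a maximally K-consistent subset of s̄ub_d(φ). -/
def KMaxChild (φ : Form) (d : ℕ) (c : Finset Form) : Prop :=
  c ⊆ φ.subBar.filter (fun ψ => ψ.md ≤ d) ∧
  Satisfiable Logic.K (th c) ∧
  ∀ ψ ∈ φ.subf, ψ.md ≤ d → (ψ ∈ c ∨ ψ.neg ∈ c)

/-- S' completes S (for logic l, with respect to φ). -/
def ViewCompletes (l : Logic) (φ : Form) (S' S : View) : Prop :=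
  ViewLComplete l φ.vars S' ∧
  S.parent ⊆ S'.parent ∧
  (∀ a ∈ S.children, ∃ a' ∈ S'.children, a ⊆ a') ∧
  (l.base = .K → ∀ a' ∈ S'.children, KMaxChild φ (childDepth S') a') ∧
  (l.base ≠ .K → ∀ a' ∈ S'.children, MaxState l φ a')

/-- The depth-0 normal form ⋀_{p∈S} p ∧ ⋀_{p∈P∖S} ¬p. -/
noncomputable def nf0 (P S : Finset ℕ) : Form :=
  Form.and (bigAnd (S.image Form.pos)) (bigAnd ((P \ S).image Form.npos))

/-- Fine's normal forms F_P^d. -/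
noncomputable def NF (P : Finset ℕ) : ℕ → Set Form
  | 0 => { χ | ∃ S ⊆ P, χ = nf0 P S }
  | d + 1 => { χ | ∃ S : Finset Form, ↑S ⊆ NF P d ∧ ∃ S0 ⊆ P,
      χ = Form.and (nf0 P S0)
            (Form.and (bigAnd (S.image Form.dia)) (Form.box (bigOr S))) }

/-- φ is complete up to its depth for l. -/
def CompleteUpToDepth (l : Logic) (φ : Form) : Prop :=
  ∀ ψ : Form, ψ.vars ⊆ φ.vars → ψ.md ≤ φ.md →
    (Valid l (φ.imp ψ) ∨ Valid l (φ.imp ψ.neg))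

/- ===== Basic lemmas ===== -/

theorem sat_neg (M : Model) : ∀ (ψ : Form) (w : M.W), M.sat w ψ.neg ↔ ¬ M.sat w ψ := by
  intro ψ
  induction ψ with
  | bot => intro w; simp [Form.neg, Model.sat]
  | top => intro w; simp [Form.neg, Model.sat]
  | pos p => intro w; simp [Form.neg, Model.sat]
  | npos p => intro w; simp [Form.neg, Model.sat]
  | and a b iha ihb => intro w; simp only [Form.neg, Model.sat, iha, ihb]; tauto
  | or a b iha ihb => intro w; simp only [Form.neg, Model.sat, iha, ihb]; tauto
  | box a ih => intro w; simp only [Form.neg, Model.sat, ih]; push_neg; tauto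
  | dia a ih => intro w; simp only [Form.neg, Model.sat, ih]; push_neg; tauto

theorem md_neg : ∀ ψ : Form, ψ.neg.md = ψ.md := by
  intro ψ
  induction ψ with
  | bot => rfl
  | top => rfl
  | pos p => rfl
  | npos p => rfl
  | and a b iha ihb => simp [Form.neg, Form.md, iha, ihb]
  | or a b iha ihb => simp [Form.neg, Form.md, iha, ihb]
  | box a ih => simp [Form.neg, Form.md, ih]
  | dia a ih => simp [Form.neg, Form.md, ih]

theorem vars_neg : ∀ ψ : Form, ψ.neg.vars = ψ.vars := by
  intro ψ
  induction ψ with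
  | bot => rfl
  | top => rfl
  | pos p => rfl
  | npos p => rfl
  | and a b iha ihb => simp [Form.neg, Form.vars, iha, ihb]
  | or a b iha ihb => simp [Form.neg, Form.vars, iha, ihb]
  | box a ih => simp [Form.neg, Form.vars, ih]
  | dia a ih => simp [Form.neg, Form.vars, ih]

theorem mem_subf_self : ∀ ψ : Form, ψ ∈ ψ.subf := by
  intro ψ
  cases ψ <;> simp [Form.subf]

theorem subf_trans : ∀ (φ ψ : Form), ψ ∈ φ.subf → ψ.subf ⊆ φ.subf := by
  intro φ
  induction φ with
  | bot => intro ψ h; simp [Form.subf] at h; subst h; simp [Form.subf]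
  | top => intro ψ h; simp [Form.subf] at h; subst h; simp [Form.subf]
  | pos p => intro ψ h; simp [Form.subf] at h; subst h; simp [Form.subf]
  | npos p => intro ψ h; simp [Form.subf] at h; subst h; simp [Form.subf]
  | and a b iha ihb =>
      intro ψ h
      simp only [Form.subf, Finset.mem_insert, Finset.mem_union] at h
      rcases h with h | h | h
      · subst h; exact fun x hx => hx
      · intro x hx
        simp only [Form.subf, Finset.mem_insert, Finset.mem_union]
        exact Or.inr (Or.inl (iha ψ h hx))
      · intro x hx
        simp only [Form.subf, Finset.mem_insert, Finset.mem_union]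
        exact Or.inr (Or.inr (ihb ψ h hx))
  | or a b iha ihb =>
      intro ψ h
      simp only [Form.subf, Finset.mem_insert, Finset.mem_union] at h
      rcases h with h | h | h
      · subst h; exact fun x hx => hx
      · intro x hx
        simp only [Form.subf, Finset.mem_insert, Finset.mem_union]
        exact Or.inr (Or.inl (iha ψ h hx))
      · intro x hx
        simp only [Form.subf, Finset.mem_insert, Finset.mem_union]
        exact Or.inr (Or.inr (ihb ψ h hx))
  | box a ih =>
      intro ψ h
      simp only [Form.subf, Finset.mem_insert] at h
      rcases h with h | h
      · subst h; exact fun x hx => hx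
      · intro x hx
        simp only [Form.subf, Finset.mem_insert]
        exact Or.inr (ih ψ h hx)
  | dia a ih =>
      intro ψ h
      simp only [Form.subf, Finset.mem_insert] at h
      rcases h with h | h
      · subst h; exact fun x hx => hx
      · intro x hx
        simp only [Form.subf, Finset.mem_insert]
        exact Or.inr (ih ψ h hx)

theorem subf_vars : ∀ (φ ψ : Form), ψ ∈ φ.subf → ψ.vars ⊆ φ.vars := by
  intro φ
  induction φ with
  | bot => intro ψ h; simp [Form.subf] at h; subst h; exact fun x hx => hx
  | top => intro ψ h; simp [Form.subf] at h; subst h; exact fun x hx => hx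
  | pos p => intro ψ h; simp [Form.subf] at h; subst h; exact fun x hx => hx
  | npos p => intro ψ h; simp [Form.subf] at h; subst h; exact fun x hx => hx
  | and a b iha ihb =>
      intro ψ h
      simp only [Form.subf, Finset.mem_insert, Finset.mem_union] at h
      rcases h with h | h | h
      · subst h; exact fun x hx => hx
      · exact fun x hx => by
          simp only [Form.vars, Finset.mem_union]; exact Or.inl (iha ψ h hx)
      · exact fun x hx => by
          simp only [Form.vars, Finset.mem_union]; exact Or.inr (ihb ψ h hx)
  | or a b iha ihb =>
      intro ψ h
      simp only [Form.subf, Finset.mem_insert, Finset.mem_union] at h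
      rcases h with h | h | h
      · subst h; exact fun x hx => hx
      · exact fun x hx => by
          simp only [Form.vars, Finset.mem_union]; exact Or.inl (iha ψ h hx)
      · exact fun x hx => by
          simp only [Form.vars, Finset.mem_union]; exact Or.inr (ihb ψ h hx)
  | box a ih =>
      intro ψ h
      simp only [Form.subf, Finset.mem_insert] at h
      rcases h with h | h
      · subst h; exact fun x hx => hx
      · exact ih ψ h
  | dia a ih =>
      intro ψ h
      simp only [Form.subf, Finset.mem_insert] at h
      rcases h with h | h
      · subst h; exact fun x hx => hx
      · exact ih ψ h
/- ===== subBar lemmas ===== -/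

theorem mem_subBar_of_subf {φ ψ : Form} (h : ψ ∈ φ.subf) : ψ ∈ φ.subBar := by
  simp [Form.subBar, Finset.mem_union]; exact Or.inl h

theorem neg_mem_subBar_of_subf {φ ψ : Form} (h : ψ ∈ φ.subf) : ψ.neg ∈ φ.subBar := by
  simp only [Form.subBar, Finset.mem_union, Finset.mem_image]
  exact Or.inr ⟨ψ, h, rfl⟩

theorem subBar_elim {φ η : Form} (h : η ∈ φ.subBar) :
    η ∈ φ.subf ∨ ∃ ν ∈ φ.subf, η = ν.neg := by
  simp only [Form.subBar, Finset.mem_union, Finset.mem_image] at h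
  rcases h with h | ⟨ν, hν, rfl⟩
  · exact Or.inl h
  · exact Or.inr ⟨ν, hν, rfl⟩

theorem subBar_vars {φ η : Form} (h : η ∈ φ.subBar) : η.vars ⊆ φ.vars := by
  rcases subBar_elim h with h | ⟨ν, hν, rfl⟩
  · exact subf_vars φ η h
  · rw [vars_neg]; exact subf_vars φ ν hν

theorem box_mem_subBar {φ χ : Form} (h : Form.box χ ∈ φ.subBar) : χ ∈ φ.subBar := by
  rcases subBar_elim h with h | ⟨ν, hν, hid⟩
  · apply mem_subBar_of_subf
    have : χ ∈ (Form.box χ).subf := by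
      simp [Form.subf]; exact Or.inr (mem_subf_self χ)
    exact subf_trans φ (Form.box χ) h this
  · cases ν with
    | dia ν' =>
        simp only [Form.neg, Form.box.injEq] at hid
        subst hid
        apply neg_mem_subBar_of_subf
        have : ν' ∈ (Form.dia ν').subf := by
          simp [Form.subf]; exact Or.inr (mem_subf_self ν')
        exact subf_trans φ (Form.dia ν') hν this
    | bot => simp [Form.neg] at hid
    | top => simp [Form.neg] at hid
    | pos p => simp [Form.neg] at hid
    | npos p => simp [Form.neg] at hid
    | and a b => simp [Form.neg] at hid
    | or a b => simp [Form.neg] at hid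
    | box a => simp [Form.neg] at hid

theorem dia_mem_subBar {φ χ : Form} (h : Form.dia χ ∈ φ.subBar) : χ ∈ φ.subBar := by
  rcases subBar_elim h with h | ⟨ν, hν, hid⟩
  · apply mem_subBar_of_subf
    have : χ ∈ (Form.dia χ).subf := by
      simp [Form.subf]; exact Or.inr (mem_subf_self χ)
    exact subf_trans φ (Form.dia χ) h this
  · cases ν with
    | box ν' =>
        simp only [Form.neg, Form.dia.injEq] at hid
        subst hid
        apply neg_mem_subBar_of_subf
        have : ν' ∈ (Form.box ν').subf := by
          simp [Form.subf]; exact Or.inr (mem_subf_self ν')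
        exact subf_trans φ (Form.box ν') hν this
    | bot => simp [Form.neg] at hid
    | top => simp [Form.neg] at hid
    | pos p => simp [Form.neg] at hid
    | npos p => simp [Form.neg] at hid
    | and a b => simp [Form.neg] at hid
    | or a b => simp [Form.neg] at hid
    | dia a => simp [Form.neg] at hid

/- ===== th / bigAnd lemmas ===== -/

theorem sat_foldr (M : Model) (w : M.W) :
    ∀ L : List Form, M.sat w (L.foldr Form.and Form.top) ↔ ∀ η ∈ L, M.sat w η := by
  intro L
  induction L with
  | nil => simp [Model.sat]
  | cons x xs ih => simp [Model.sat, ih]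

theorem sat_th (M : Model) (w : M.W) (a : Finset Form) :
    M.sat w (th a) ↔ ∀ η ∈ a, M.sat w η := by
  unfold th bigAnd
  rw [sat_foldr]
  constructor
  · intro h η hη; exact h η (Finset.mem_toList.2 hη)
  · intro h η hη; exact h η (Finset.mem_toList.1 hη)

theorem vars_foldr_subset {X : Finset ℕ} :
    ∀ L : List Form, (∀ η ∈ L, η.vars ⊆ X) → (L.foldr Form.and Form.top).vars ⊆ X := by
  intro L
  induction L with
  | nil => intro _; simp [Form.vars]
  | cons x xs ih =>
      intro h
      simp only [List.foldr, Form.vars, Finset.union_subset_iff]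
      exact ⟨h x (by simp), ih (fun η hη => h η (by simp [hη]))⟩

theorem th_vars_subset {X : Finset ℕ} {a : Finset Form} (h : ∀ η ∈ a, η.vars ⊆ X) :
    (th a).vars ⊆ X := by
  unfold th bigAnd
  exact vars_foldr_subset _ (fun η hη => h η (Finset.mem_toList.1 hη))

theorem mem_vars_foldr :
    ∀ (L : List Form) (η : Form), η ∈ L → η.vars ⊆ (L.foldr Form.and Form.top).vars := by
  intro L
  induction L with
  | nil => intro η h; simp at h
  | cons x xs ih =>
      intro η h
      simp only [List.mem_cons] at h
      rcases h with rfl | h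
      · intro p hp; simp only [List.foldr, Form.vars, Finset.mem_union]; exact Or.inl hp
      · intro p hp
        simp only [List.foldr, Form.vars, Finset.mem_union]
        exact Or.inr (ih η h hp)

theorem mem_th_vars {a : Finset Form} {η : Form} (h : η ∈ a) : η.vars ⊆ (th a).vars := by
  unfold th bigAnd
  exact mem_vars_foldr _ η (Finset.mem_toList.2 h)

/- ===== imp / Valid lemmas ===== -/

theorem sat_imp (M : Model) (w : M.W) (x y : Form) :
    M.sat w (x.imp y) ↔ (M.sat w x → M.sat w y) := by
  unfold Form.imp
  simp only [Model.sat, sat_neg]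
  tauto

theorem valid_imp_intro (l : Logic) (x y : Form)
    (h : ∀ (M : Model), M.IsFor l → ∀ w : M.W, M.sat w x → M.sat w y) :
    Valid l (x.imp y) := by
  intro M hM w
  rw [sat_imp]
  exact h M hM w

theorem valid_imp_elim {l : Logic} {x y : Form} (h : Valid l (x.imp y))
    {M : Model} (hM : M.IsFor l) {w : M.W} (hx : M.sat w x) : M.sat w y :=
  (sat_imp M w x y).1 (h M hM w) hx
/- ===== maximal state lemmas ===== -/

theorem finset_ne_elim {a b : Finset Form} (h : a ≠ b) :
    (∃ η, η ∈ a ∧ η ∉ b) ∨ (∃ η, η ∈ b ∧ η ∉ a) := by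
  by_contra hc
  push_neg at hc
  exact h (Finset.ext (fun η => ⟨fun hη => hc.1 η hη, fun hη => hc.2 η hη⟩))

/-- one-sided clash: η ∈ a, η ∉ b, b decides all relevant subformulas -/
theorem clash_one_sided {φ : Form} {a b : Finset Form} {η : Form}
    (hηa : η ∈ a) (hηb : η ∉ b)
    (hsub : η ∈ φ.subBar)
    (hdec : ∀ ν ∈ φ.subf, ν.md = η.md → (ν ∈ b ∨ ν.neg ∈ b))
    {M : Model} {w : M.W}
    (hwa : M.sat w (th a)) (hwb : M.sat w (th b)) : False := by
  have hsatη : M.sat w η := (sat_th M w a).1 hwa η hηa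
  rcases subBar_elim hsub with hf | ⟨ν, hν, rfl⟩
  · rcases hdec η hf rfl with h | h
    · exact hηb h
    · have := (sat_th M w b).1 hwb η.neg h
      exact (sat_neg M η w).1 this hsatη
  · rcases hdec ν hν (md_neg ν).symm with h | h
    · have := (sat_th M w b).1 hwb ν h
      exact (sat_neg M ν w).1 hsatη this
    · exact hηb h

theorem maxstate_disjoint {l : Logic} {φ : Form} {a b : Finset Form}
    (ha : MaxState l φ a) (hb : MaxState l φ b) (hab : a ≠ b)
    {M : Model} {w : M.W}
    (hwa : M.sat w (th a)) (hwb : M.sat w (th b)) : False := by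
  rcases finset_ne_elim hab with ⟨η, h1, h2⟩ | ⟨η, h1, h2⟩
  · exact clash_one_sided h1 h2 (ha.1 h1) (fun ν hν _ => hb.2.2 ν hν) hwa hwb
  · exact clash_one_sided h1 h2 (hb.1 h1) (fun ν hν _ => ha.2.2 ν hν) hwb hwa

theorem kmax_disjoint {φ : Form} {d : ℕ} {a b : Finset Form}
    (ha : KMaxChild φ d a) (hb : KMaxChild φ d b) (hab : a ≠ b)
    {M : Model} {w : M.W}
    (hwa : M.sat w (th a)) (hwb : M.sat w (th b)) : False := by
  have hmem : ∀ {c : Finset Form}, KMaxChild φ d c → ∀ {η}, η ∈ c →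
      η ∈ φ.subBar ∧ η.md ≤ d := by
    intro c hc η hη
    have := hc.1 hη
    simp only [Finset.mem_filter] at this
    exact this
  rcases finset_ne_elim hab with ⟨η, h1, h2⟩ | ⟨η, h1, h2⟩
  · obtain ⟨hs, hmd⟩ := hmem ha h1
    exact clash_one_sided h1 h2 hs (fun ν hν hmdν => hb.2.2 ν hν (hmdν ▸ hmd)) hwa hwb
  · obtain ⟨hs, hmd⟩ := hmem hb h1
    exact clash_one_sided h1 h2 hs (fun ν hν hmdν => ha.2.2 ν hν (hmdν ▸ hmd)) hwb hwa
/- ===== the attachment construction ===== -/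

structure PM : Type 1 where
  M : Model
  pt : M.W

section Attach

variable (S : View) (F : {x : Finset Form // x ∈ S.children} → PM) (tr rf : Prop)

def AttachW : Type := Option (Σ i : {x : Finset Form // x ∈ S.children}, (F i).M.W)

def AttachR : AttachW S F → AttachW S F → Prop := fun a b =>
  match a, b with
  | none, none => rf
  | none, some q =>
      (∃ i, q = ⟨i, (F i).pt⟩) ∨ (tr ∧ ∃ i y, q = ⟨i, y⟩ ∧ (F i).M.R (F i).pt y)
  | some _, none => False
  | some p, some q => ∃ (i : _) (x : (F i).M.W) (y : (F i).M.W),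
      p = ⟨i, x⟩ ∧ q = ⟨i, y⟩ ∧ (F i).M.R x y

instance : Finite (AttachW S F) := by
  unfold AttachW
  haveI h1 : ∀ i : {x : Finset Form // x ∈ S.children}, Finite ((F i).M.W) :=
    fun i => (F i).M.finite
  haveI h2 : Finite (Σ i : {x : Finset Form // x ∈ S.children}, (F i).M.W) := inferInstance
  haveI := Fintype.ofFinite (Σ i : {x : Finset Form // x ∈ S.children}, (F i).M.W)
  exact Finite.of_fintype _

def attachM : Model where
  W := AttachW S F
  nonempty := ⟨none⟩
  finite := inferInstance
  R := AttachR S F tr rf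
  V := fun a =>
    match a with
    | none => {p | Form.pos p ∈ S.parent}
    | some q => (F q.1).M.V q.2

theorem attach_R_some_iff (i : {x : Finset Form // x ∈ S.children}) (x : (F i).M.W)
    (b : AttachW S F) :
    (attachM S F tr rf).R (some ⟨i, x⟩) b ↔
      ∃ y, b = some ⟨i, y⟩ ∧ (F i).M.R x y := by
  cases b with
  | none =>
      constructor
      · intro h; exact h.elim
      · rintro ⟨y, hy, -⟩; cases hy
  | some q =>
      constructor
      · rintro ⟨i', x', y', hp, hq, hr⟩
        injection hp with h1 h2
        subst h1
        have h2' : x = x' := eq_of_heq h2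
        subst h2'
        exact ⟨y', by rw [hq], hr⟩
      · rintro ⟨y, hy, hr⟩
        injection hy with hy'
        exact ⟨i, x, y, rfl, by rw [hy'], hr⟩

theorem attach_sat_some (η : Form) (i : {x : Finset Form // x ∈ S.children}) :
    ∀ x : (F i).M.W, (attachM S F tr rf).sat (some ⟨i, x⟩) η ↔ (F i).M.sat x η := by
  induction η with
  | bot => intro x; simp [Model.sat]
  | top => intro x; simp [Model.sat]
  | pos p => intro x; simp [Model.sat, attachM]
  | npos p => intro x; simp [Model.sat, attachM]
  | and a b iha ihb => intro x; simp [Model.sat, iha, ihb]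
  | or a b iha ihb => intro x; simp [Model.sat, iha, ihb]
  | box a ih =>
      intro x
      simp only [Model.sat]
      constructor
      · intro h y hy
        have := h (some ⟨i, y⟩) ((attach_R_some_iff S F tr rf i x _).2 ⟨y, rfl, hy⟩)
        exact (ih y).1 this
      · intro h b hb
        rcases (attach_R_some_iff S F tr rf i x b).1 hb with ⟨y, rfl, hy⟩
        exact (ih y).2 (h y hy)
  | dia a ih =>
      intro x
      simp only [Model.sat]
      constructor
      · rintro ⟨b, hb, hsat⟩
        rcases (attach_R_some_iff S F tr rf i x b).1 hb with ⟨y, rfl, hy⟩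
        exact ⟨y, hy, (ih y).1 hsat⟩
      · rintro ⟨y, hy, hsat⟩
        exact ⟨some ⟨i, y⟩, (attach_R_some_iff S F tr rf i x _).2 ⟨y, rfl, hy⟩,
          (ih y).2 hsat⟩

theorem attach_root_sat (l : Logic) (φ : Form)
    (hLC : LClosed l φ.vars S.parent)
    (hsatp : Satisfiable l (th S.parent))
    (hdia : ∀ ψ : Form, Form.dia ψ ∈ S.parent → ∃ c ∈ S.children, ψ ∈ c)
    (hbox : ∀ ψ : Form, Form.box ψ ∈ S.parent → ∀ c ∈ S.children, ψ ∈ c)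
    (hboxtr : tr → ∀ ψ : Form, Form.box ψ ∈ S.parent → ∀ c ∈ S.children, Form.box ψ ∈ c)
    (hrf : rf → ∀ ψ : Form, Form.box ψ ∈ S.parent → ψ ∈ S.parent)
    (hF : ∀ i, (F i).M.sat (F i).pt (th i.val)) :
    ∀ η ∈ S.parent, (attachM S F tr rf).sat none η := by
  obtain ⟨M0, hM0, w0, hw0⟩ := hsatp
  have hw0' := (sat_th M0 w0 S.parent).1 hw0
  intro η
  induction η with
  | bot => intro h; exact ((hw0' _ h) : False).elim
  | top => intro _; trivial
  | pos p => intro h; exact h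
  | npos p =>
      intro h
      intro hmem
      have h1 : M0.sat w0 (Form.pos p) := hw0' _ hmem
      have h2 : M0.sat w0 (Form.npos p) := hw0' _ h
      exact h2 h1
  | and a b iha ihb =>
      intro h
      exact ⟨iha (hLC.1 a b h).1, ihb (hLC.1 a b h).2⟩
  | or a b iha ihb =>
      intro h
      rcases hLC.2.1 a b h with h' | h'
      · exact Or.inl (iha h')
      · exact Or.inr (ihb h')
  | box a ih =>
      intro h
      intro b hb
      cases b with
      | none => exact ih (hrf hb a h)
      | some q =>
          obtain ⟨i, y⟩ := q
          rcases hb with ⟨i', hq⟩ | ⟨htr, i', y', hq, hr⟩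
          · injection hq with h1 h2
            subst h1
            have h2' : y = (F i).pt := eq_of_heq h2
            subst h2'
            apply (attach_sat_some S F tr rf a i _).2
            have := (sat_th _ _ _).1 (hF i) a (hbox a h i.val i.prop)
            exact this
          · injection hq with h1 h2
            subst h1
            have h2' : y = y' := eq_of_heq h2
            subst h2'
            apply (attach_sat_some S F tr rf a i _).2
            have hboxmem := hboxtr htr a h i.val i.prop
            have hsatbox : (F i).M.sat (F i).pt (Form.box a) :=
              (sat_th _ _ _).1 (hF i) _ hboxmem
            exact hsatbox y hr
  | dia a ih =>
      intro h
      obtain ⟨c, hc, hac⟩ := hdia a h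
      refine ⟨some ⟨⟨c, hc⟩, (F ⟨c, hc⟩).pt⟩, Or.inl ⟨⟨c, hc⟩, rfl⟩, ?_⟩
      apply (attach_sat_some S F tr rf a _ _).2
      exact (sat_th _ _ _).1 (hF ⟨c, hc⟩) a hac

end Attach
/- ===== frame conditions of the attachment ===== -/

section AttachFrame

variable (S : View) (F : {x : Finset Form // x ∈ S.children} → PM)

theorem attach_R_trans (tr rf : Prop) (htrue : tr)
    (htr : ∀ i, ∀ x y z : (F i).M.W, (F i).M.R x y → (F i).M.R y z → (F i).M.R x z) :
    ∀ a b c : (attachM S F tr rf).W,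
      (attachM S F tr rf).R a b → (attachM S F tr rf).R b c → (attachM S F tr rf).R a c := by
  intro a b c hab hbc
  cases a with
  | none =>
      cases b with
      | none => exact hbc
      | some q =>
          obtain ⟨i, y⟩ := q
          rcases (attach_R_some_iff S F tr rf i y _).1 hbc with ⟨y', rfl, hyy'⟩
          rcases hab with ⟨i', hq⟩ | ⟨-, i', y'', hq, hr⟩
          · injection hq with h1 h2
            subst h1
            have : y = (F i).pt := eq_of_heq h2
            subst this
            exact Or.inr ⟨htrue, i, y', rfl, hyy'⟩
          · injection hq with h1 h2
            subst h1
            have : y = y'' := eq_of_heq h2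
            subst this
            exact Or.inr ⟨htrue, i, y', rfl, htr i _ _ _ hr hyy'⟩
  | some p =>
      obtain ⟨i, x⟩ := p
      rcases (attach_R_some_iff S F tr rf i x _).1 hab with ⟨y, rfl, hxy⟩
      rcases (attach_R_some_iff S F tr rf i y _).1 hbc with ⟨z, rfl, hyz⟩
      exact (attach_R_some_iff S F tr rf i x _).2 ⟨z, rfl, htr i _ _ _ hxy hyz⟩

theorem attach_isFor_K : (attachM S F False False).IsFor Logic.K := by
  constructor
  · trivial
  · intro h; simp [Logic.K] at h

theorem attach_isFor_K4 (rf : Prop) (hc : ∀ i, (F i).M.IsFor Logic.K4) :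
    (attachM S F True rf).IsFor Logic.K4 := by
  constructor
  · exact attach_R_trans S F True rf trivial (fun i => (hc i).1)
  · intro h; simp [Logic.K4] at h

theorem attach_isFor_KD4 (rf : Prop) (hne : Nonempty {x : Finset Form // x ∈ S.children})
    (hc : ∀ i, (F i).M.IsFor Logic.KD4) :
    (attachM S F True rf).IsFor Logic.KD4 := by
  constructor
  · constructor
    · intro w
      cases w with
      | none =>
          obtain ⟨i⟩ := hne
          exact ⟨some ⟨i, (F i).pt⟩, Or.inl ⟨i, rfl⟩⟩
      | some p =>
          obtain ⟨i, x⟩ := p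
          obtain ⟨y, hy⟩ := (hc i).1.1 x
          exact ⟨some ⟨i, y⟩, (attach_R_some_iff S F True rf i x _).2 ⟨y, rfl, hy⟩⟩
    · exact attach_R_trans S F True rf trivial (fun i => (hc i).1.2)
  · intro h; simp [Logic.KD4] at h

theorem attach_isFor_S4 (rf : Prop) (hrf : rf) (hc : ∀ i, (F i).M.IsFor Logic.S4) :
    (attachM S F True rf).IsFor Logic.S4 := by
  constructor
  · constructor
    · intro w
      cases w with
      | none => exact hrf
      | some p =>
          obtain ⟨i, x⟩ := p
          exact (attach_R_some_iff S F True rf i x _).2 ⟨x, rfl, (hc i).1.1 x⟩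
    · exact attach_R_trans S F True rf trivial (fun i => (hc i).1.2)
  · intro h; simp [Logic.S4] at h

end AttachFrame
/- ===== canonical model over maximal states (transitive logics) ===== -/

section Canonical

variable (l : Logic) (φ : Form)

theorem isFor_trans_of (hltr : l = Logic.K4 ∨ l = Logic.KD4 ∨ l = Logic.S4)
    {M : Model} (hM : M.IsFor l) : ∀ a b c : M.W, M.R a b → M.R b c → M.R a c := by
  rcases hltr with rfl | rfl | rfl
  · exact hM.1
  · exact hM.1.2
  · exact hM.1.2

def St : Type := {a : Finset Form // MaxState l φ a}

instance : Finite (St l φ) := by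
  unfold St
  apply Finite.of_injective
    (f := fun a : {a : Finset Form // MaxState l φ a} =>
      (⟨a.val, Finset.mem_powerset.2 a.2.1⟩ : {x // x ∈ φ.subBar.powerset}))
  intro a b hab
  apply Subtype.ext
  have := congrArg Subtype.val hab
  simpa using this

noncomputable def extractSt (N : Model) (y : N.W) : Finset Form :=
  @Finset.filter _ (fun η => N.sat y η) (Classical.decPred _) φ.subBar

theorem mem_extractSt {N : Model} {y : N.W} {η : Form} :
    η ∈ extractSt φ N y ↔ η ∈ φ.subBar ∧ N.sat y η := by
  unfold extractSt
  exact @Finset.mem_filter _ _ (Classical.decPred _) _ _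

theorem extractSt_max {N : Model} (hN : N.IsFor l) (y : N.W) :
    MaxState l φ (extractSt φ N y) := by
  refine ⟨fun η hη => ((mem_extractSt φ).1 hη).1, ?_, ?_⟩
  · exact ⟨N, hN, y, (sat_th _ _ _).2 (fun η hη => ((mem_extractSt φ).1 hη).2)⟩
  · intro ψ hψ
    by_cases h : N.sat y ψ
    · exact Or.inl ((mem_extractSt φ).2 ⟨mem_subBar_of_subf hψ, h⟩)
    · exact Or.inr ((mem_extractSt φ).2 ⟨neg_mem_subBar_of_subf hψ, (sat_neg N ψ y).2 h⟩)

def CR : St l φ → St l φ → Prop := fun a b =>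
  ∀ χ : Form, Form.box χ ∈ a.val → χ ∈ b.val ∧ Form.box χ ∈ b.val

noncomputable def CModel (hne : Nonempty (St l φ)) : Model where
  W := St l φ
  nonempty := hne
  finite := inferInstance
  R := CR l φ
  V := fun a => {p | Form.pos p ∈ a.val}

/-- every maximal state then satisfies, at its own point of the canonical model,
all its member formulas -/
theorem C_sat (hltr : l = Logic.K4 ∨ l = Logic.KD4 ∨ l = Logic.S4)
    (hne : Nonempty (St l φ)) :
    ∀ (η : Form) (a : St l φ), η ∈ a.val → (CModel l φ hne).sat a η := by
  intro η
  induction η with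
  | bot =>
      intro a h
      obtain ⟨M0, hM0, w0, hw0⟩ := a.2.2.1
      exact ((sat_th M0 w0 a.val).1 hw0 _ h : False).elim
  | top => intro a h; trivial
  | pos p => intro a h; exact h
  | npos p =>
      intro a h
      intro hmem
      obtain ⟨M0, hM0, w0, hw0⟩ := a.2.2.1
      have h1 := (sat_th M0 w0 a.val).1 hw0 _ h
      have h2 := (sat_th M0 w0 a.val).1 hw0 _ hmem
      exact h1 h2
  | and x y ihx ihy =>
      intro a h
      obtain ⟨M0, hM0, w0, hw0⟩ := a.2.2.1
      have hw0' := (sat_th M0 w0 a.val).1 hw0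
      have hsand : M0.sat w0 (Form.and x y) := hw0' _ h
      have hx : x ∈ a.val ∧ y ∈ a.val := by
        rcases subBar_elim (a.2.1 h) with hf | ⟨ν, hν, hid⟩
        · have hxf : x ∈ φ.subf := subf_trans φ _ hf (by
            simp [Form.subf]; exact Or.inr (Or.inl (mem_subf_self x)))
          have hyf : y ∈ φ.subf := subf_trans φ _ hf (by
            simp [Form.subf]; exact Or.inr (Or.inr (mem_subf_self y)))
          constructor
          · rcases a.2.2.2 x hxf with h' | h'
            · exact h'
            · exact absurd hsand.1 ((sat_neg M0 x w0).1 (hw0' _ h'))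
          · rcases a.2.2.2 y hyf with h' | h'
            · exact h'
            · exact absurd hsand.2 ((sat_neg M0 y w0).1 (hw0' _ h'))
        · cases ν with
          | or ν1 ν2 =>
              simp only [Form.neg, Form.and.injEq] at hid
              obtain ⟨rfl, rfl⟩ := hid
              have hν1 : ν1 ∈ φ.subf := subf_trans φ _ hν (by
                simp [Form.subf]; exact Or.inr (Or.inl (mem_subf_self ν1)))
              have hν2 : ν2 ∈ φ.subf := subf_trans φ _ hν (by
                simp [Form.subf]; exact Or.inr (Or.inr (mem_subf_self ν2)))
              constructor
              · rcases a.2.2.2 ν1 hν1 with h' | h'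
                · exact absurd (hw0' _ h') ((sat_neg M0 ν1 w0).1 hsand.1)
                · exact h'
              · rcases a.2.2.2 ν2 hν2 with h' | h'
                · exact absurd (hw0' _ h') ((sat_neg M0 ν2 w0).1 hsand.2)
                · exact h'
          | bot => simp [Form.neg] at hid
          | top => simp [Form.neg] at hid
          | pos p => simp [Form.neg] at hid
          | npos p => simp [Form.neg] at hid
          | and ν1 ν2 => simp [Form.neg] at hid
          | box ν1 => simp [Form.neg] at hid
          | dia ν1 => simp [Form.neg] at hid
      exact ⟨ihx a hx.1, ihy a hx.2⟩
  | or x y ihx ihy =>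
      intro a h
      obtain ⟨M0, hM0, w0, hw0⟩ := a.2.2.1
      have hw0' := (sat_th M0 w0 a.val).1 hw0
      have hsor : M0.sat w0 (Form.or x y) := hw0' _ h
      have hx : x ∈ a.val ∨ y ∈ a.val := by
        rcases subBar_elim (a.2.1 h) with hf | ⟨ν, hν, hid⟩
        · have hxf : x ∈ φ.subf := subf_trans φ _ hf (by
            simp [Form.subf]; exact Or.inr (Or.inl (mem_subf_self x)))
          have hyf : y ∈ φ.subf := subf_trans φ _ hf (by
            simp [Form.subf]; exact Or.inr (Or.inr (mem_subf_self y)))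
          rcases a.2.2.2 x hxf with h' | h'
          · exact Or.inl h'
          · rcases a.2.2.2 y hyf with h'' | h''
            · exact Or.inr h''
            · rcases hsor with hs | hs
              · exact absurd hs ((sat_neg M0 x w0).1 (hw0' _ h'))
              · exact absurd hs ((sat_neg M0 y w0).1 (hw0' _ h''))
        · cases ν with
          | and ν1 ν2 =>
              simp only [Form.neg, Form.or.injEq] at hid
              obtain ⟨rfl, rfl⟩ := hid
              have hν1 : ν1 ∈ φ.subf := subf_trans φ _ hν (by
                simp [Form.subf]; exact Or.inr (Or.inl (mem_subf_self ν1)))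
              have hν2 : ν2 ∈ φ.subf := subf_trans φ _ hν (by
                simp [Form.subf]; exact Or.inr (Or.inr (mem_subf_self ν2)))
              rcases a.2.2.2 ν1 hν1 with h' | h'
              · rcases a.2.2.2 ν2 hν2 with h'' | h''
                · have hnand := (sat_neg M0 (Form.and ν1 ν2) w0).1 (hw0' _ h)
                  exact absurd (⟨hw0' _ h', hw0' _ h''⟩ : M0.sat w0 (Form.and ν1 ν2)) hnand
                · exact Or.inr h''
              · exact Or.inl h'
          | bot => simp [Form.neg] at hid
          | top => simp [Form.neg] at hid
          | pos p => simp [Form.neg] at hid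
          | npos p => simp [Form.neg] at hid
          | or ν1 ν2 => simp [Form.neg] at hid
          | box ν1 => simp [Form.neg] at hid
          | dia ν1 => simp [Form.neg] at hid
      rcases hx with h' | h'
      · exact Or.inl (ihx a h')
      · exact Or.inr (ihy a h')
  | box x ih =>
      intro a h
      intro b hb
      exact ih b (hb x h).1
  | dia x ih =>
      intro a h
      obtain ⟨M0, hM0, w0, hw0⟩ := a.2.2.1
      have hw0' := (sat_th M0 w0 a.val).1 hw0
      obtain ⟨y, hy, hsaty⟩ := hw0' _ h
      have hbmax : MaxState l φ (extractSt φ M0 y) := extractSt_max l φ hM0 y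
      refine ⟨⟨extractSt φ M0 y, hbmax⟩, ?_, ?_⟩
      · intro χ hχ
        have hsatbox : M0.sat w0 (Form.box χ) := hw0' _ hχ
        constructor
        · exact (mem_extractSt φ).2 ⟨box_mem_subBar (a.2.1 hχ), hsatbox y hy⟩
        · refine (mem_extractSt φ).2 ⟨a.2.1 hχ, ?_⟩
          intro z hz
          exact hsatbox z (isFor_trans_of l hltr hM0 w0 y z hy hz)
      · exact ih _ ((mem_extractSt φ).2 ⟨dia_mem_subBar (a.2.1 h), hsaty⟩)

theorem C_sat_th_self (hltr : l = Logic.K4 ∨ l = Logic.KD4 ∨ l = Logic.S4)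
    (hne : Nonempty (St l φ)) (a : St l φ) :
    (CModel l φ hne).sat a (th a.val) :=
  (sat_th _ _ _).2 (fun η hη => C_sat l φ hltr hne η a hη)

theorem C_isFor (hltr : l = Logic.K4 ∨ l = Logic.KD4 ∨ l = Logic.S4)
    (hne : Nonempty (St l φ)) : (CModel l φ hne).IsFor l := by
  have htrans : ∀ a b c : St l φ, CR l φ a b → CR l φ b c → CR l φ a c := by
    intro a b c hab hbc χ hχ
    exact hbc χ (hab χ hχ).2
  have hserial : l = Logic.KD4 → ∀ a : St l φ, ∃ b : St l φ, CR l φ a b := by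
    rintro rfl a
    obtain ⟨M0, hM0, w0, hw0⟩ := a.2.2.1
    have hw0' := (sat_th M0 w0 a.val).1 hw0
    obtain ⟨y, hy⟩ := hM0.1.1 w0
    refine ⟨⟨extractSt φ M0 y, extractSt_max Logic.KD4 φ hM0 y⟩, ?_⟩
    intro χ hχ
    have hsatbox : M0.sat w0 (Form.box χ) := hw0' _ hχ
    constructor
    · exact (mem_extractSt φ).2 ⟨box_mem_subBar (a.2.1 hχ), hsatbox y hy⟩
    · refine (mem_extractSt φ).2 ⟨a.2.1 hχ, ?_⟩
      intro z hz
      exact hsatbox z (isFor_trans_of _ (Or.inr (Or.inl rfl)) hM0 w0 y z hy hz)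
  have hrefl : l = Logic.S4 → ∀ a : St l φ, CR l φ a a := by
    rintro rfl a
    intro χ hχ
    obtain ⟨M0, hM0, w0, hw0⟩ := a.2.2.1
    have hw0' := (sat_th M0 w0 a.val).1 hw0
    have hsatbox : M0.sat w0 (Form.box χ) := hw0' _ hχ
    have hsatχ : M0.sat w0 χ := hsatbox w0 (hM0.1.1 w0)
    refine ⟨?_, hχ⟩
    rcases subBar_elim (a.2.1 hχ) with hf | ⟨ν, hν, hid⟩
    · have hxf : χ ∈ φ.subf := subf_trans φ _ hf (by
        simp [Form.subf]; exact Or.inr (mem_subf_self χ))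
      rcases a.2.2.2 χ hxf with h' | h'
      · exact h'
      · exact absurd hsatχ ((sat_neg M0 χ w0).1 (hw0' _ h'))
    · cases ν with
      | dia ν' =>
          simp only [Form.neg, Form.box.injEq] at hid
          subst hid
          have hν' : ν' ∈ φ.subf := subf_trans φ _ hν (by
            simp [Form.subf]; exact Or.inr (mem_subf_self ν'))
          rcases a.2.2.2 ν' hν' with h' | h'
          · exact absurd (hw0' _ h') ((sat_neg M0 ν' w0).1 hsatχ)
          · exact h'
      | bot => simp [Form.neg] at hid
      | top => simp [Form.neg] at hid
      | pos p => simp [Form.neg] at hid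
      | npos p => simp [Form.neg] at hid
      | and ν1 ν2 => simp [Form.neg] at hid
      | or ν1 ν2 => simp [Form.neg] at hid
      | box ν1 => simp [Form.neg] at hid
  rcases hltr with rfl | rfl | rfl
  · exact ⟨htrans, by intro h; simp [Logic.K4] at h⟩
  · exact ⟨⟨hserial rfl, htrans⟩, by intro h; simp [Logic.KD4] at h⟩
  · exact ⟨⟨hrefl rfl, htrans⟩, by intro h; simp [Logic.S4] at h⟩

end Canonical
/- ===== helper: the fresh root sees each attached point ===== -/

theorem attach_R_root_pt (S : View) (F : {x : Finset Form // x ∈ S.children} → PM)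
    (tr rf : Prop) (i : {x : Finset Form // x ∈ S.children}) :
    (attachM S F tr rf).R none (some ⟨i, (F i).pt⟩) := by
  show AttachR S F tr rf none (some ⟨i, (F i).pt⟩)
  exact Or.inl ⟨i, rfl⟩

theorem stmt14' (l : Logic)
    (hl : l = Logic.K ∨ l = Logic.K4 ∨ l = Logic.KD4 ∨ l = Logic.S4)
    (φ : Form) (S : View) (hWF : S.WF φ)
    (hcons : ViewConsistent l S) (hself : ViewCompletes l φ S S)
    (hcomp : Complete l (th S.parent)) :
    ∀ c ∈ S.children, Complete l (th c) := by
  obtain ⟨hVLC, -, -, hKmax, hMax⟩ := hself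
  obtain ⟨hLCp, hLCc, hdia, hbox, hboxtr, hkd4⟩ := hVLC
  intro c hc ψ hψvars
  have hcsub : c ⊆ φ.subBar := hWF.2 c hc
  have hcvars : (th c).vars ⊆ φ.vars :=
    th_vars_subset (fun η hη => subBar_vars (hcsub hη))
  have hφp : φ.vars ⊆ (th S.parent).vars := by
    intro p hp
    rcases hLCp.2.2.2 p hp with h | h
    · exact mem_th_vars h (by simp [Form.vars])
    · exact mem_th_vars h (by simp [Form.vars])
  have hψφ : ψ.vars ⊆ φ.vars := hψvars.trans hcvars
  have hΛvars : ∀ ξ : Form, ξ.vars ⊆ φ.vars →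
      (Form.box ((th c).imp ξ)).vars ⊆ (th S.parent).vars := by
    intro ξ hξ
    show (Form.box (Form.or (th c).neg ξ)).vars ⊆ _
    simp only [Form.vars, vars_neg]
    exact Finset.union_subset (hcvars.trans hφp) (hξ.trans hφp)
  by_cases hKbase : l = Logic.K
  · -- ===================== the K case =====================
    subst hKbase
    have hkm : ∀ a ∈ S.children, KMaxChild φ (childDepth S) a := hKmax rfl
    have hex : ∀ i : {x : Finset Form // x ∈ S.children},
        ∃ pm : PM, pm.M.IsFor Logic.K ∧ pm.M.sat pm.pt (th i.val) := by
      intro i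
      obtain ⟨M, hM, w, hw⟩ := hcons.2 i.val i.2
      exact ⟨⟨M, w⟩, hM, hw⟩
    choose G hG1 hG2 using hex
    have build : ∀ (N : Model), N.IsFor Logic.K → ∀ v : N.W, N.sat v (th c) →
        ∃ F : {x : Finset Form // x ∈ S.children} → PM,
          F ⟨c, hc⟩ = PM.mk N v ∧
          (attachM S F False False).IsFor Logic.K ∧
          (attachM S F False False).sat none (th S.parent) ∧
          ∀ i, (F i).M.sat (F i).pt (th i.val) := by
      intro N hN v hv
      refine ⟨fun i => if i.val = c then PM.mk N v else G i, if_pos rfl,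
        attach_isFor_K S _, ?_, ?_⟩
      case refine_2 =>
        intro i
        beta_reduce
        by_cases h : i.val = c
        · rw [show (if i.val = c then PM.mk N v else G i) = PM.mk N v from if_pos h]
          show N.sat v (th i.val)
          rw [h]; exact hv
        · rw [show (if i.val = c then PM.mk N v else G i) = G i from if_neg h]
          exact hG2 i
      case refine_1 =>
        apply (sat_th _ _ _).2
        apply attach_root_sat S _ False False Logic.K φ hLCp hcons.1 hdia hbox
          (fun h => h.elim) (fun h => h.elim)
        intro i
        beta_reduce
        by_cases h : i.val = c
        · rw [show (if i.val = c then PM.mk N v else G i) = PM.mk N v from if_pos h]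
          show N.sat v (th i.val)
          rw [h]; exact hv
        · rw [show (if i.val = c then PM.mk N v else G i) = G i from if_neg h]
          exact hG2 i
    rcases hcomp (Form.box ((th c).imp ψ)) (hΛvars ψ hψφ) with h1 | h1
    · left
      apply valid_imp_intro
      intro N hN v hv0
      obtain ⟨F, hFc, hIsF, hroot, hsatF⟩ := build N hN v hv0
      have hΛ := valid_imp_elim h1 hIsF hroot
      simp only [Model.sat] at hΛ
      have hsucc := hΛ (some ⟨⟨c, hc⟩, (F ⟨c, hc⟩).pt⟩)
        (attach_R_root_pt S F False False ⟨c, hc⟩)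
      have htr := (attach_sat_some S F False False ((th c).imp ψ) ⟨c, hc⟩
        ((F ⟨c, hc⟩).pt)).1 hsucc
      rw [hFc] at htr
      exact (sat_imp N v _ _).1 htr hv0
    · right
      apply valid_imp_intro
      intro N hN v hv0
      obtain ⟨F, hFc, hIsF, hroot, hsatF⟩ := build N hN v hv0
      have hΛ := valid_imp_elim h1 hIsF hroot
      have hΛ' : (attachM S F False False).sat none
          (Form.dia (Form.and (th c).neg.neg ψ.neg)) := hΛ
      simp only [Model.sat] at hΛ'
      obtain ⟨b, hb, hsatb⟩ := hΛ'
      cases b with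
      | none => exact (hb : False).elim
      | some q =>
          obtain ⟨i, y⟩ := q
          rcases (hb : _ ∨ _) with ⟨i', hq⟩ | ⟨hFalse, -⟩
          · injection hq with hi1 hi2
            subst hi1
            have hy : y = (F i).pt := eq_of_heq hi2
            subst hy
            have htr := (attach_sat_some S F False False
              (Form.and (th c).neg.neg ψ.neg) i ((F i).pt)).1 hsatb
            simp only [Model.sat] at htr
            have hθ : (F i).M.sat (F i).pt (th c) := by
              have h' := htr.1
              rw [sat_neg, sat_neg] at h'
              exact not_not.mp h'
            by_cases hic : i.val = c
            · have hieq : i = ⟨c, hc⟩ := Subtype.ext hic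
              subst hieq
              rw [hFc] at htr
              exact htr.2
            · exact absurd hθ (fun hθ' =>
                kmax_disjoint (hkm i.val i.2) (hkm c hc) hic (hsatF i) hθ')
          · exact hFalse.elim
  · -- ===================== the transitive cases =====================
    have hltr : l = Logic.K4 ∨ l = Logic.KD4 ∨ l = Logic.S4 := by
      rcases hl with h | h | h | h
      · exact absurd h hKbase
      · exact Or.inl h
      · exact Or.inr (Or.inl h)
      · exact Or.inr (Or.inr h)
    have hbaseK : l.base ≠ BaseLogic.K := by
      rcases hltr with rfl | rfl | rfl
      · intro h; exact BaseLogic.noConfusion h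
      · intro h; exact BaseLogic.noConfusion h
      · intro h; exact BaseLogic.noConfusion h
    have hmax : ∀ a ∈ S.children, MaxState l φ a := hMax hbaseK
    have hcmax : MaxState l φ c := hmax c hc
    have hne : Nonempty (St l φ) := ⟨⟨c, hcmax⟩⟩
    have hCfor : (CModel l φ hne).IsFor l := C_isFor l φ hltr hne
    have hbases : l.base = BaseLogic.K4 ∨ l.base = BaseLogic.KD4 ∨ l.base = BaseLogic.S4 := by
      rcases hltr with rfl | rfl | rfl
      · exact Or.inl rfl
      · exact Or.inr (Or.inl rfl)
      · exact Or.inr (Or.inr rfl)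
    have hrfunfold : (l = Logic.S4) → ∀ ξ : Form, Form.box ξ ∈ S.parent → ξ ∈ S.parent := by
      intro h ξ hξ
      exact hLCp.2.2.1 (Or.inr (by subst h; rfl)) ξ hξ
    have hboxtr' : True → ∀ ξ : Form, Form.box ξ ∈ S.parent →
        ∀ a ∈ S.children, Form.box ξ ∈ a := fun _ => hboxtr hbases
    have hIsForAtt : ∀ F : {x : Finset Form // x ∈ S.children} → PM,
        (∀ i, (F i).M.IsFor l) → (attachM S F True (l = Logic.S4)).IsFor l := by
      intro F hF
      rcases hltr with h4 | h4 | h4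
      · rw [h4] at hF ⊢; exact attach_isFor_K4 S F _ hF
      · rw [h4] at hF ⊢; exact attach_isFor_KD4 S F _ ⟨⟨c, hc⟩⟩ hF
      · have : l = Logic.S4 := h4
        rw [h4] at hF
        subst h4
        exact attach_isFor_S4 S F _ rfl hF
    by_cases hI : ∀ η ∈ S.parent, η ∈ c
    · have himp : ∀ (M : Model) (w : M.W), M.sat w (th c) → M.sat w (th S.parent) := by
        intro M w hw
        exact (sat_th _ _ _).2 (fun η hη => (sat_th _ _ _).1 hw η (hI η hη))
      rcases hcomp ψ (hψφ.trans hφp) with h | h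
      · exact Or.inl (valid_imp_intro _ _ _
          (fun M hM w hw => valid_imp_elim h hM (himp M w hw)))
      · exact Or.inr (valid_imp_intro _ _ _
          (fun M hM w hw => valid_imp_elim h hM (himp M w hw)))
    · push_neg at hI
      obtain ⟨η0, hη0p, hη0c⟩ := hI
      have hII : ∀ (M : Model) (w : M.W),
          M.sat w (th S.parent) → M.sat w (th c) → False := by
        intro M w hwp hwc
        exact clash_one_sided hη0p hη0c (hWF.1 hη0p)
          (fun ν hν _ => hcmax.2.2 ν hν) hwp hwc
      have build : ∀ (N : Model), N.IsFor l → ∀ v : N.W, N.sat v (th c) →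
          ∃ F : {x : Finset Form // x ∈ S.children} → PM,
            F ⟨c, hc⟩ = PM.mk N v ∧
            (attachM S F True (l = Logic.S4)).IsFor l ∧
            (attachM S F True (l = Logic.S4)).sat none (th S.parent) := by
        intro N hN v hv
        refine ⟨fun i => if i.val = c then PM.mk N v
            else PM.mk (CModel l φ hne) ⟨i.val, hmax i.val i.2⟩, if_pos rfl, ?_, ?_⟩
        · apply hIsForAtt
          intro i
          beta_reduce
          by_cases h : i.val = c
          · rw [show (if i.val = c then PM.mk N v
              else PM.mk (CModel l φ hne) ⟨i.val, hmax i.val i.2⟩) = PM.mk N v from if_pos h]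
            exact hN
          · rw [show (if i.val = c then PM.mk N v
              else PM.mk (CModel l φ hne) ⟨i.val, hmax i.val i.2⟩) =
                PM.mk (CModel l φ hne) ⟨i.val, hmax i.val i.2⟩ from if_neg h]
            exact hCfor
        · apply (sat_th _ _ _).2
          apply attach_root_sat S _ True (l = Logic.S4) l φ hLCp hcons.1 hdia hbox
            hboxtr' hrfunfold
          intro i
          beta_reduce
          by_cases h : i.val = c
          · rw [show (if i.val = c then PM.mk N v
              else PM.mk (CModel l φ hne) ⟨i.val, hmax i.val i.2⟩) = PM.mk N v from if_pos h]
            show N.sat v (th i.val)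
            rw [h]; exact hv
          · rw [show (if i.val = c then PM.mk N v
              else PM.mk (CModel l φ hne) ⟨i.val, hmax i.val i.2⟩) =
                PM.mk (CModel l φ hne) ⟨i.val, hmax i.val i.2⟩ from if_neg h]
            exact C_sat_th_self l φ hltr hne ⟨i.val, hmax i.val i.2⟩
      have evalNeg : ∀ ξ : Form,
          Valid l ((th S.parent).imp (Form.box ((th c).imp ξ)).neg) →
          (CModel l φ hne).sat ⟨c, hcmax⟩ ξ.neg := by
        intro ξ hval
        have hIsF : (attachM S (fun i => PM.mk (CModel l φ hne) ⟨i.val, hmax i.val i.2⟩)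
            True (l = Logic.S4)).IsFor l := hIsForAtt _ (fun i => hCfor)
        have hroot : (attachM S (fun i => PM.mk (CModel l φ hne) ⟨i.val, hmax i.val i.2⟩)
            True (l = Logic.S4)).sat none (th S.parent) := by
          apply (sat_th _ _ _).2
          apply attach_root_sat S _ True (l = Logic.S4) l φ hLCp hcons.1 hdia hbox
            hboxtr' hrfunfold
          intro i
          exact C_sat_th_self l φ hltr hne ⟨i.val, hmax i.val i.2⟩
        have hs := valid_imp_elim hval hIsF hroot
        have hs' : (attachM S (fun i => PM.mk (CModel l φ hne) ⟨i.val, hmax i.val i.2⟩)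
            True (l = Logic.S4)).sat none (Form.dia (Form.and (th c).neg.neg ξ.neg)) := hs
        simp only [Model.sat] at hs'
        obtain ⟨b, hb, hsatb⟩ := hs'
        cases b with
        | none =>
            exfalso
            simp only [Model.sat] at hsatb
            have hθ : (attachM S (fun i => PM.mk (CModel l φ hne)
                ⟨i.val, hmax i.val i.2⟩) True (l = Logic.S4)).sat none (th c) := by
              have h' := hsatb.1
              exact not_not.mp (fun hn => (sat_neg _ _ _).1 h' ((sat_neg _ _ _).2 hn))
            exact hII _ _ hroot hθ
        | some q =>
            obtain ⟨i, y⟩ := q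
            have htr := (attach_sat_some S
              (fun i => PM.mk (CModel l φ hne) ⟨i.val, hmax i.val i.2⟩) True (l = Logic.S4)
              (Form.and (th c).neg.neg ξ.neg) i y).1 hsatb
            simp only [Model.sat] at htr
            have hθ : (CModel l φ hne).sat y (th c) := by
              have h' := htr.1
              rw [sat_neg, sat_neg] at h'
              exact not_not.mp h'
            have hselfy : (CModel l φ hne).sat y (th y.val) := C_sat_th_self l φ hltr hne y
            have hyc : y = (⟨c, hcmax⟩ : St l φ) := by
              apply Subtype.ext
              by_contra hne'
              exact maxstate_disjoint y.2 hcmax hne' hselfy hθ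
            rw [hyc] at htr
            exact htr.2
      rcases hcomp (Form.box ((th c).imp ψ)) (hΛvars ψ hψφ) with h1 | h1
      · left
        apply valid_imp_intro
        intro N hN v hv0
        obtain ⟨F, hFc, hIsF, hroot⟩ := build N hN v hv0
        have hΛ := valid_imp_elim h1 hIsF hroot
        simp only [Model.sat] at hΛ
        have hsucc := hΛ (some ⟨⟨c, hc⟩, (F ⟨c, hc⟩).pt⟩)
          (attach_R_root_pt S F True (l = Logic.S4) ⟨c, hc⟩)
        have htr := (attach_sat_some S F True (l = Logic.S4) ((th c).imp ψ) ⟨c, hc⟩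
          ((F ⟨c, hc⟩).pt)).1 hsucc
        rw [hFc] at htr
        exact (sat_imp N v _ _).1 htr hv0
      · have hA := evalNeg ψ h1
        rcases hcomp (Form.box ((th c).imp ψ.neg))
            (hΛvars ψ.neg (by rw [vars_neg]; exact hψφ)) with h2 | h2
        · right
          apply valid_imp_intro
          intro N hN v hv0
          obtain ⟨F, hFc, hIsF, hroot⟩ := build N hN v hv0
          have hΛ := valid_imp_elim h2 hIsF hroot
          simp only [Model.sat] at hΛ
          have hsucc := hΛ (some ⟨⟨c, hc⟩, (F ⟨c, hc⟩).pt⟩)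
            (attach_R_root_pt S F True (l = Logic.S4) ⟨c, hc⟩)
          have htr := (attach_sat_some S F True (l = Logic.S4) ((th c).imp ψ.neg) ⟨c, hc⟩
            ((F ⟨c, hc⟩).pt)).1 hsucc
          rw [hFc] at htr
          exact (sat_imp N v _ _).1 htr hv0
        · have hB := evalNeg ψ.neg h2
          exact ((sat_neg _ _ _).1 hB hA).elim

/-- for a consistent view S that completes itself, if th(p(S))
is complete for l, then th(c) is complete for l for every child c ∈ C(S). -/
theorem stmt14 (l : Logic)
    (hl : l = Logic.K ∨ l = Logic.K4 ∨ l = Logic.KD4 ∨ l = Logic.S4)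
    (φ : Form) (S : View) (hWF : S.WF φ)
    (hcons : ViewConsistent l S) (hself : ViewCompletes l φ S S)
    (hcomp : Complete l (th S.parent)) :
    ∀ c ∈ S.children, Complete l (th c) := by
  exact stmt14' l hl φ S hWF hcons hself hcomp
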